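/- Convergence of the normalized variance (Hurst factor): for every real κ with |κ| < 1/2, the limit H(κ) := lim_{N→∞} m₂(N; κ/N)/N exists, and there exist δ > 0 and C > 0 such that |H(κ) − (1 + 2κ + (8/3)κ²)| ≤ C·|κ|³ for all 0 < |κ| < δ. -/

import Mathlib

open Filter

/-- The discrete stochastic process with memory: binomial transfer probabilities
with coupling `ε`. -/
noncomputable def P (ε : ℝ) : ℕ → ℤ → ℝ
  | 0, x => if x = 0 then 1 else 0
  | n + 1, x =>
      P ε n (x + 1) * (1 / 2 - ((x : ℝ) + 1) * ε) +
      P ε n (x - 1) * (1 / 2 + ((x : ℝ) - 1) * ε)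

/-- The second moment with coupling `ε`: `m₂(n; ε) = Σ_{x ∈ ℤ} x² · P(n, x; ε)`. -/
noncomputable def m2 (ε : ℝ) (n : ℕ) : ℝ := ∑' x : ℤ, (x : ℝ) ^ 2 * P ε n x

lemma P_supp (ε : ℝ) : ∀ n : ℕ, ∀ x : ℤ, (n : ℤ) < |x| → P ε n x = 0 := by
  intro n
  induction n with
  | zero =>
    intro x hx
    simp only [P, ite_eq_right_iff]
    intro h; subst h; simp at hx
  | succ n ih =>
    intro x hx
    have e1 : x - (x + 1) = -1 := by ring
    have e2 : x - (x - 1) = 1 := by ring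
    have a1 := abs_sub_abs_le_abs_sub x (x + 1)
    have a2 := abs_sub_abs_le_abs_sub x (x - 1)
    rw [e1] at a1; rw [e2] at a2
    simp only [abs_neg, abs_one] at a1 a2
    push_cast at hx
    have h1 : (n : ℤ) < |x + 1| := by linarith
    have h2 : (n : ℤ) < |x - 1| := by linarith
    simp [P, ih _ h1, ih _ h2]

lemma summable_bdd (f : ℤ → ℝ) (m : ℕ) (h : ∀ x : ℤ, (m : ℤ) < |x| → f x = 0) :
    Summable f :=
  summable_of_ne_finset_zero (s := Finset.Icc (-(m : ℤ)) m) fun x hx =>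
    h x (by
      by_contra hc
      exact hx (Finset.mem_Icc.mpr (abs_le.mp (not_lt.mp hc))))

lemma summable_mul_P (ε : ℝ) (n : ℕ) (c : ℤ → ℝ) :
    Summable (fun y : ℤ => c y * P ε n y) :=
  summable_bdd _ n fun x hx => by rw [P_supp ε n x hx, mul_zero]

lemma key (ε : ℝ) (n : ℕ) (c : ℤ → ℝ) :
    ∑' x : ℤ, c x * P ε (n + 1) x
      = ∑' y : ℤ, (c (y - 1) * (1 / 2 - (y : ℝ) * ε)
          + c (y + 1) * (1 / 2 + (y : ℝ) * ε)) * P ε n y := by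
  set F : ℤ → ℝ := fun y => c (y - 1) * (1 / 2 - (y : ℝ) * ε) * P ε n y with hFdef
  set G : ℤ → ℝ := fun y => c (y + 1) * (1 / 2 + (y : ℝ) * ε) * P ε n y with hGdef
  have hF : Summable F := summable_mul_P ε n _
  have hG : Summable G := summable_mul_P ε n _
  have hA : Summable (fun x : ℤ => F (x + 1)) :=
    ((Equiv.addRight (1 : ℤ)).summable_iff (f := F)).mpr hF
  have hB : Summable (fun x : ℤ => G (x - 1)) :=
    ((Equiv.subRight (1 : ℤ)).summable_iff (f := G)).mpr hG
  have step1 : ∑' x : ℤ, c x * P ε (n + 1) x = ∑' x : ℤ, (F (x + 1) + G (x - 1)) := by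
    refine tsum_congr fun x => ?_
    simp only [P, hFdef, hGdef]
    push_cast
    ring
  have e1 : ∑' x : ℤ, F (x + 1) = ∑' y : ℤ, F y := (Equiv.addRight (1 : ℤ)).tsum_eq F
  have e2 : ∑' x : ℤ, G (x - 1) = ∑' y : ℤ, G y := (Equiv.subRight (1 : ℤ)).tsum_eq G
  rw [step1, Summable.tsum_add hA hB, e1, e2, ← Summable.tsum_add hF hG]
  exact tsum_congr fun y => by simp only [hFdef, hGdef]; ring

lemma mass (ε : ℝ) : ∀ n : ℕ, ∑' x : ℤ, P ε n x = 1 := by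
  intro n
  induction n with
  | zero =>
    have : (fun x : ℤ => P ε 0 x) = fun x : ℤ => if x = 0 then (1 : ℝ) else 0 := rfl
    rw [this]
    exact tsum_ite_eq (0 : ℤ) (fun _ => (1 : ℝ))
  | succ n ih =>
    have h := key ε n (fun _ => 1)
    simp only [one_mul] at h
    calc ∑' x : ℤ, P ε (n + 1) x
        = ∑' y : ℤ, ((1 / 2 - (y : ℝ) * ε) + (1 / 2 + (y : ℝ) * ε)) * P ε n y := h
      _ = ∑' y : ℤ, P ε n y := tsum_congr fun y => by ring
      _ = 1 := ih

lemma m2_closed (ε : ℝ) : ∀ n : ℕ, m2 ε n = ∑ k ∈ Finset.range n, (1 + 4 * ε) ^ k := by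
  intro n
  induction n with
  | zero =>
    simp only [Finset.range_zero, Finset.sum_empty, m2]
    have : (fun x : ℤ => (x : ℝ) ^ 2 * P ε 0 x) = fun _ : ℤ => (0 : ℝ) := by
      funext x
      by_cases hx : x = 0
      · subst hx; simp
      · have : P ε 0 x = 0 := by simp [P, hx]
        rw [this, mul_zero]
    rw [this, tsum_zero]
  | succ n ih =>
    have h := key ε n (fun x : ℤ => ((x : ℝ)) ^ 2)
    have hsum2 : Summable (fun y : ℤ => (1 + 4 * ε) * ((y : ℝ) ^ 2 * P ε n y)) :=
      summable_mul_P ε n (fun y => (1 + 4 * ε) * (y : ℝ) ^ 2) |>.congr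
        (fun y => by ring)
    have hsumP : Summable (fun y : ℤ => P ε n y) :=
      (summable_mul_P ε n (fun _ => 1)).congr (fun y => by ring)
    calc m2 ε (n + 1)
        = ∑' y : ℤ, (((y - 1 : ℤ) : ℝ) ^ 2 * (1 / 2 - (y : ℝ) * ε)
            + ((y + 1 : ℤ) : ℝ) ^ 2 * (1 / 2 + (y : ℝ) * ε)) * P ε n y := h
      _ = ∑' y : ℤ, ((1 + 4 * ε) * ((y : ℝ) ^ 2 * P ε n y) + P ε n y) := by
          refine tsum_congr fun y => ?_
          push_cast
          ring
      _ = (1 + 4 * ε) * m2 ε n + 1 := by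
          rw [Summable.tsum_add hsum2 hsumP, tsum_mul_left, mass ε n, m2]
      _ = ∑ k ∈ Finset.range (n + 1), (1 + 4 * ε) ^ k := by
          rw [ih, geom_sum_succ]

/-- convergence of the normalized variance (Hurst factor): for every
`|κ| < 1/2` the limit `H(κ) = lim_{N→∞} m₂(N; κ/N)/N` exists, and there exist
`δ > 0`, `C > 0` with `|H(κ) − (1 + 2κ + (8/3)κ²)| ≤ C·|κ|³` for all `0 < |κ| < δ`. -/
theorem hurst_factor_convergence :
    ∃ H : ℝ → ℝ,
      (∀ κ : ℝ, |κ| < 1 / 2 →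
        Tendsto (fun N : ℕ => m2 (κ / N) N / N) atTop (nhds (H κ))) ∧
      ∃ δ > (0 : ℝ), ∃ C > (0 : ℝ), ∀ κ : ℝ, 0 < |κ| → |κ| < δ →
        |H κ - (1 + 2 * κ + (8 / 3) * κ ^ 2)| ≤ C * |κ| ^ 3 := by
  refine ⟨fun κ => if κ = 0 then 1 else (Real.exp (4 * κ) - 1) / (4 * κ), ?_, ?_⟩
  · intro κ _
    by_cases hκ : κ = 0
    · subst hκ
      simp only [if_pos rfl]
      have hev : (fun N : ℕ => m2 ((0 : ℝ) / N) N / N) =ᶠ[atTop] (fun _ : ℕ => (1 : ℝ)) := by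
        filter_upwards [eventually_ge_atTop 1] with N hN
        have hN0 : (N : ℝ) ≠ 0 := by positivity
        rw [zero_div, m2_closed]
        simp [hN0]
      exact Tendsto.congr' hev.symm tendsto_const_nhds
    · simp only [if_neg hκ]
      have hbase := Real.tendsto_one_add_div_pow_exp (4 * κ)
      have hlim : Tendsto (fun N : ℕ => ((1 + 4 * κ / (N : ℝ)) ^ N - 1) / (4 * κ))
          atTop (nhds ((Real.exp (4 * κ) - 1) / (4 * κ))) :=
        (hbase.sub_const 1).div_const (4 * κ)
      refine Tendsto.congr' ?_ hlim
      filter_upwards [eventually_ge_atTop 1] with N hN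
      have hN0 : (N : ℝ) ≠ 0 := by
        have : (1 : ℕ) ≤ N := hN
        positivity
      have hr : (1 : ℝ) + 4 * (κ / N) ≠ 1 := by
        intro hcontra
        have : 4 * (κ / (N : ℝ)) = 0 := by linarith
        have := mul_eq_zero.mp this
        rcases this with h | h
        · norm_num at h
        · exact hκ (by field_simp at h; simpa using h)
      rw [m2_closed, geom_sum_eq hr]
      have : (1 : ℝ) + 4 * (κ / N) - 1 = 4 * κ / N := by ring
      rw [this]
      rw [show (1 : ℝ) + 4 * κ / (N : ℝ) = 1 + 4 * (κ / N) by ring]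
      field_simp
  · refine ⟨1 / 8, by norm_num, 10 / 3, by norm_num, ?_⟩
    intro κ hκpos hκlt
    have hκ : κ ≠ 0 := fun h => by simp [h] at hκpos
    simp only [if_neg hκ]
    set x : ℝ := 4 * κ with hx
    have hxabs : |x| = 4 * |κ| := by rw [hx, abs_mul]; norm_num
    have hx1 : |x| ≤ 1 := by rw [hxabs]; linarith
    have hbound := Real.exp_bound hx1 (n := 4) (by norm_num)
    have hsum : ∑ m ∈ Finset.range 4, x ^ m / (m.factorial : ℝ)
        = 1 + x + x ^ 2 / 2 + x ^ 3 / 6 := by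
      norm_num [Finset.sum_range_succ, Nat.factorial]
    rw [hsum] at hbound
    have hx0 : x ≠ 0 := by simp [hx, hκ]
    have heq : (Real.exp (4 * κ) - 1) / (4 * κ) - (1 + 2 * κ + 8 / 3 * κ ^ 2)
        = (Real.exp x - (1 + x + x ^ 2 / 2 + x ^ 3 / 6)) / x := by
      rw [hx]
      field_simp
      ring
    rw [heq, abs_div]
    have hxpos : 0 < |x| := abs_pos.mpr hx0
    rw [div_le_iff₀ hxpos]
    have hb : |Real.exp x - (1 + x + x ^ 2 / 2 + x ^ 3 / 6)|
        ≤ |x| ^ 4 * (5 / 96) := by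
      convert hbound using 2
      norm_num [Nat.factorial]
    refine hb.trans ?_
    have : |x| ^ 4 * (5 / 96) = (5 / 96) * |x| ^ 3 * |x| := by ring
    rw [this]
    have h3 : (5 : ℝ) / 96 * |x| ^ 3 ≤ 10 / 3 * |κ| ^ 3 := by
      rw [hxabs]
      ring_nf
      nlinarith [pow_pos hκpos 3]
    exact mul_le_mul_of_nonneg_right h3 (abs_nonneg x)
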